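/- Let c > 0 and K > 0. For each N, let d_{1,N}, …, d_{N,N} ∈ {0,1} and π_{1,N}, …, π_{N,N} ∈ (0,1] be deterministic, with N⁻¹ ∑_{i=1}^N d_{i,N}/π_{i,N} → 1 as N → ∞. Let N*_{1,N}, …, N*_{N,N} be nonnegative real random variables and κ_{1,N}, κ_{2,N}, κ_{3,N} deterministic numbers with κ_{1,N} → 1 and κ_{2,N}, κ_{3,N} ≤ K, such that: (P1) 𝔼[N*_{i,N}] = π_{i,N}⁻¹ d_{i,N} κ_{1,N}; (P2) Var(N*_{i,N}) ≤ π_{i,N}⁻¹ d_{i,N} κ_{2,N}; (P3) |Cov(N*_{i,N}, N*_{h,N})| ≤ (c/N) π_{i,N}⁻¹ π_{h,N}⁻¹ d_{i,N} d_{h,N} κ_{3,N} for i ≠ h. Then N*/N := N⁻¹ ∑_{i=1}^N N*_{i,N} d_{i,N} → 1 in probability as N → ∞. (Proposition 5 of the paper (lemma_6a), stated conditionally on the sample: the size N* of any pseudo-population whose replication counts satisfy conditions P1–P3 is asymptotically equivalent to the population size N.) -/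

import Mathlib

open MeasureTheory ProbabilityTheory Filter Topology

lemma myIntegrableMul {Ω : Type*} [MeasurableSpace Ω] {P : Measure Ω} {f g : Ω → ℝ}
    (hf : MemLp f 2 P) (hg : MemLp g 2 P) :
    Integrable (fun ω => f ω * g ω) P := by
  refine ((hf.integrable_sq.add hg.integrable_sq).div_const 2).mono'
    (hf.aestronglyMeasurable.mul hg.aestronglyMeasurable) (ae_of_all _ fun ω => ?_)
  have h := sq_nonneg (|f ω| - |g ω|)
  have h1 : ‖f ω * g ω‖ = |f ω| * |g ω| := by rw [Real.norm_eq_abs, abs_mul]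
  rw [h1]; simp only [Pi.add_apply]
  have h2 : |f ω| ^ 2 = f ω ^ 2 := sq_abs _
  have h3 : |g ω| ^ 2 = g ω ^ 2 := sq_abs _
  nlinarith [abs_nonneg (f ω), abs_nonneg (g ω)]

/-- Proposition 5 of the paper (lemma_6a), conditionally on the sample: if the
pseudo-population replication counts `N*ᵢ` satisfy the regularity conditions P1–P3, then
the pseudo-population size satisfies `N*/N = N⁻¹ ∑ᵢ N*ᵢ dᵢ → 1` in probability. -/
theorem stmt_18
    {Ω : Type*} [MeasurableSpace Ω] (P : Measure Ω) [IsProbabilityMeasure P]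
    (c K : ℝ) (hc : 0 < c) (hK : 0 < K)
    (d : ℕ → ℕ → ℝ) (π : ℕ → ℕ → ℝ)
    (hd01 : ∀ N i, d N i = 0 ∨ d N i = 1)
    (hπ : ∀ N, ∀ i < N, 0 < π N i ∧ π N i ≤ 1)
    (hlln : Tendsto (fun N : ℕ => (N : ℝ)⁻¹ * ∑ i ∈ Finset.range N, d N i / π N i) atTop
      (𝓝 1))
    (Nstar : ℕ → ℕ → Ω → ℝ)
    (hNstar0 : ∀ N i ω, 0 ≤ Nstar N i ω)
    (hNstarmeas : ∀ N i, Measurable (Nstar N i))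
    (hNstarL2 : ∀ N, ∀ i < N, MemLp (Nstar N i) 2 P)
    (κ1 κ2 κ3 : ℕ → ℝ)
    (hκ1 : Tendsto κ1 atTop (𝓝 1))
    (hκ2 : ∀ N, κ2 N ≤ K) (hκ3 : ∀ N, κ3 N ≤ K)
    -- P1: conditional mean of the replication counts
    (hP1 : ∀ N, ∀ i < N, ∫ ω, Nstar N i ω ∂P = (π N i)⁻¹ * d N i * κ1 N)
    -- P2: conditional variance bound
    (hP2 : ∀ N, ∀ i < N, variance (Nstar N i) P ≤ (π N i)⁻¹ * d N i * κ2 N)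
    -- P3: conditional covariance bound
    (hP3 : ∀ N, ∀ i < N, ∀ h < N, i ≠ h →
      |∫ ω, (Nstar N i ω - ∫ ω', Nstar N i ω' ∂P) *
          (Nstar N h ω - ∫ ω', Nstar N h ω' ∂P) ∂P| ≤
        c / N * ((π N i)⁻¹ * (π N h)⁻¹ * d N i * d N h * κ3 N)) :
    ∀ ε > (0 : ℝ),
      Tendsto (fun N : ℕ =>
          P {ω | ε ≤ |(N : ℝ)⁻¹ * (∑ i ∈ Finset.range N, Nstar N i ω * d N i) - 1|})
        atTop (𝓝 0) := by
  intro ε hε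
  have hε2 : (0:ℝ) < ε / 2 := by linarith
  have hd0 : ∀ N i, 0 ≤ d N i := fun N i => by rcases hd01 N i with h | h <;> simp [h]
  have hdsq : ∀ N i, d N i * d N i = d N i := fun N i => by
    rcases hd01 N i with h | h <;> simp [h]
  set a : ℕ → ℝ := fun N : ℕ => (N : ℝ)⁻¹ * ∑ i ∈ Finset.range N, d N i / π N i with ha_def
  set X : ℕ → Ω → ℝ :=
    fun N ω => (N : ℝ)⁻¹ * ∑ i ∈ Finset.range N, Nstar N i ω * d N i with hX_def
  have hq0 : ∀ N, ∀ i ∈ Finset.range N, 0 ≤ d N i / π N i := fun N i hi =>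
    div_nonneg (hd0 N i) (hπ N i (Finset.mem_range.mp hi)).1.le
  have ha0 : ∀ N, 0 ≤ a N := fun N =>
    mul_nonneg (by positivity) (Finset.sum_nonneg (hq0 N))
  have hZL2 : ∀ N, ∀ i ∈ Finset.range N, MemLp (fun ω => Nstar N i ω * d N i) 2 P := by
    intro N i hi
    simpa [mul_comm] using (hNstarL2 N i (Finset.mem_range.mp hi)).const_mul (d N i)
  have hXL2 : ∀ N, MemLp (X N) 2 P := fun N =>
    (memLp_finset_sum (Finset.range N) (hZL2 N)).const_mul _
  have hZint : ∀ N, ∀ i ∈ Finset.range N, Integrable (fun ω => Nstar N i ω * d N i) P :=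
    fun N i hi => (hZL2 N i hi).integrable one_le_two
  -- mean of X N
  have hEX : ∀ N, ∫ ω, X N ω ∂P = κ1 N * a N := by
    intro N
    have h1 : ∫ ω, X N ω ∂P
        = (N : ℝ)⁻¹ * ∑ i ∈ Finset.range N, ∫ ω, Nstar N i ω * d N i ∂P := by
      simp only [hX_def]
      rw [integral_const_mul, integral_finset_sum _ (hZint N)]
    have h2 : ∀ i ∈ Finset.range N, ∫ ω, Nstar N i ω * d N i ∂P = κ1 N * (d N i / π N i) := by
      intro i hi
      rw [integral_mul_const, hP1 N i (Finset.mem_range.mp hi), div_eq_mul_inv]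
      linear_combination κ1 N * (π N i)⁻¹ * hdsq N i
    rw [h1, Finset.sum_congr rfl h2, ← Finset.mul_sum]
    simp only [ha_def]
    ring
  have hmean : Tendsto (fun N => κ1 N * a N) atTop (𝓝 1) := by
    simpa using hκ1.mul hlln
  -- variance bound
  have hVar : ∀ N : ℕ, 0 < N → variance (X N) P ≤ (K * a N + c * K * a N ^ 2) / N := by
    intro N hN
    have hNpos : (0:ℝ) < N := Nat.cast_pos.mpr hN
    have hN0 : (N:ℝ) ≠ 0 := hNpos.ne'
    set W : ℕ → Ω → ℝ := fun i ω => d N i * (Nstar N i ω - (π N i)⁻¹ * d N i * κ1 N)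
      with hW_def
    have hWL2 : ∀ i ∈ Finset.range N, MemLp (W i) 2 P := fun i hi =>
      ((hNstarL2 N i (Finset.mem_range.mp hi)).sub (memLp_const _)).const_mul _
    have hWmul : ∀ i ∈ Finset.range N, ∀ h ∈ Finset.range N,
        Integrable (fun ω => W i ω * W h ω) P := fun i hi h hh =>
      myIntegrableMul (hWL2 i hi) (hWL2 h hh)
    have hXc : ∀ ω, X N ω - ∫ ω', X N ω' ∂P = (N:ℝ)⁻¹ * ∑ i ∈ Finset.range N, W i ω := by
      intro ω
      rw [hEX N]
      have hterm : ∀ i ∈ Finset.range N,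
          W i ω = Nstar N i ω * d N i - κ1 N * (d N i / π N i) := by
        intro i hi
        simp only [hW_def]
        rw [div_eq_mul_inv]
        linear_combination (-(π N i)⁻¹ * κ1 N) * hdsq N i
      rw [Finset.sum_congr rfl hterm, Finset.sum_sub_distrib, ← Finset.mul_sum]
      simp only [hX_def, ha_def]
      ring
    have hvar_eq : variance (X N) P
        = (N:ℝ)⁻¹ ^ 2 * ∑ i ∈ Finset.range N, ∑ h ∈ Finset.range N,
            ∫ ω, W i ω * W h ω ∂P := by
      rw [variance_eq_integral (hXL2 N).aestronglyMeasurable.aemeasurable,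
        show (∫ ω, (X N ω - ∫ ω', X N ω' ∂P) ^ 2 ∂P) = ∫ ω, (((X N - fun _ => ∫ ω', X N ω' ∂P : Ω → ℝ)) ^ (2:ℕ)) ω ∂P from rfl]
      have hpt : ∀ ω, (((X N - fun _ => ∫ ω', X N ω' ∂P : Ω → ℝ)) ^ (2:ℕ)) ω
          = (N:ℝ)⁻¹ ^ 2 * ∑ i ∈ Finset.range N, ∑ h ∈ Finset.range N, W i ω * W h ω := by
        intro ω
        have hsq : (∑ i ∈ Finset.range N, W i ω) ^ 2
            = ∑ i ∈ Finset.range N, ∑ h ∈ Finset.range N, W i ω * W h ω := by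
          rw [sq, Finset.sum_mul_sum]
        simp only [Pi.pow_apply, Pi.sub_apply]
        rw [hXc ω, mul_pow, hsq]
      have h1 : ∫ ω, (((X N - fun _ => ∫ ω', X N ω' ∂P : Ω → ℝ)) ^ (2:ℕ)) ω ∂P
          = ∫ ω, (N:ℝ)⁻¹ ^ 2 * ∑ i ∈ Finset.range N, ∑ h ∈ Finset.range N,
              W i ω * W h ω ∂P :=
        integral_congr_ae (ae_of_all _ hpt)
      rw [h1, integral_const_mul,
        integral_finset_sum _ (fun i hi => integrable_finset_sum _ (fun h hh => hWmul i hi h hh))]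
      congr 1
      exact Finset.sum_congr rfl fun i hi => integral_finset_sum _ (hWmul i hi)
    -- diagonal bound
    have hdiag : ∀ i ∈ Finset.range N,
        ∫ ω, W i ω * W i ω ∂P ≤ K * (d N i / π N i) := by
      intro i hi
      have hiN := Finset.mem_range.mp hi
      have h1 : ∫ ω, W i ω * W i ω ∂P = d N i * d N i * variance (Nstar N i) P := by
        rw [variance_eq_integral (hNstarL2 N i hiN).aestronglyMeasurable.aemeasurable, ← integral_const_mul]
        refine integral_congr_ae (ae_of_all _ fun ω => ?_)
        simp only [hW_def, Pi.pow_apply, Pi.sub_apply, hP1 N i hiN]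
        ring
      rw [h1, hdsq N i]
      have h3 : d N i * variance (Nstar N i) P ≤ d N i * ((π N i)⁻¹ * d N i * κ2 N) :=
        mul_le_mul_of_nonneg_left (hP2 N i hiN) (hd0 N i)
      have h5 : d N i * ((π N i)⁻¹ * d N i * κ2 N) = (d N i / π N i) * κ2 N := by
        rw [div_eq_mul_inv]
        linear_combination ((π N i)⁻¹ * κ2 N) * hdsq N i
      have h6 : (d N i / π N i) * κ2 N ≤ (d N i / π N i) * K :=
        mul_le_mul_of_nonneg_left (hκ2 N) (hq0 N i hi)
      calc d N i * variance (Nstar N i) P ≤ (d N i / π N i) * κ2 N := by rw [← h5]; exact h3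
        _ ≤ (d N i / π N i) * K := h6
        _ = K * (d N i / π N i) := mul_comm _ _
    -- off-diagonal bound
    have hoff : ∀ i ∈ Finset.range N, ∀ h ∈ Finset.range N, i ≠ h →
        ∫ ω, W i ω * W h ω ∂P
          ≤ c / N * K * (d N i / π N i) * (d N h / π N h) := by
      intro i hi h hh hih
      have hiN := Finset.mem_range.mp hi
      have hhN := Finset.mem_range.mp hh
      set Cov := ∫ ω, (Nstar N i ω - ∫ ω', Nstar N i ω' ∂P) *
          (Nstar N h ω - ∫ ω', Nstar N h ω' ∂P) ∂P with hCov_def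
      have h1 : ∫ ω, W i ω * W h ω ∂P = d N i * d N h * Cov := by
        rw [hCov_def, ← integral_const_mul]
        refine integral_congr_ae (ae_of_all _ fun ω => ?_)
        simp only [hW_def, hP1 N i hiN, hP1 N h hhN]
        ring
      have hdd : 0 ≤ d N i * d N h := mul_nonneg (hd0 N i) (hd0 N h)
      have h3 := hP3 N i hiN h hhN hih
      have h4 : d N i * d N h * Cov ≤ d N i * d N h * |Cov| :=
        mul_le_mul_of_nonneg_left (le_abs_self _) hdd
      have h5 : d N i * d N h * |Cov|
          ≤ d N i * d N h * (c / N * ((π N i)⁻¹ * (π N h)⁻¹ * d N i * d N h * κ3 N)) :=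
        mul_le_mul_of_nonneg_left h3 hdd
      have h6 : d N i * d N h * (c / N * ((π N i)⁻¹ * (π N h)⁻¹ * d N i * d N h * κ3 N))
          = c / N * ((d N i / π N i) * (d N h / π N h)) * κ3 N := by
        rcases hd01 N i with hdi | hdi <;> rcases hd01 N h with hdh | hdh <;>
          simp [hdi, hdh] <;> ring
      have hfrac : 0 ≤ c / N * ((d N i / π N i) * (d N h / π N h)) :=
        mul_nonneg (div_nonneg hc.le hNpos.le) (mul_nonneg (hq0 N i hi) (hq0 N h hh))
      have h7 : c / N * ((d N i / π N i) * (d N h / π N h)) * κ3 N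
          ≤ c / N * ((d N i / π N i) * (d N h / π N h)) * K := by
        exact mul_le_mul_of_nonneg_left (hκ3 N) hfrac
      calc ∫ ω, W i ω * W h ω ∂P = d N i * d N h * Cov := h1
        _ ≤ d N i * d N h * |Cov| := h4
        _ ≤ d N i * d N h * (c / N * ((π N i)⁻¹ * (π N h)⁻¹ * d N i * d N h * κ3 N)) := h5
        _ = c / N * ((d N i / π N i) * (d N h / π N h)) * κ3 N := h6
        _ ≤ c / N * ((d N i / π N i) * (d N h / π N h)) * K := h7
        _ = c / N * K * (d N i / π N i) * (d N h / π N h) := by ring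
    -- combine
    set S : ℝ := ∑ i ∈ Finset.range N, d N i / π N i with hS_def
    have hS0 : 0 ≤ S := Finset.sum_nonneg (hq0 N)
    have hsum : ∑ i ∈ Finset.range N, ∑ h ∈ Finset.range N, ∫ ω, W i ω * W h ω ∂P
        ≤ K * S + c / N * K * S ^ 2 := by
      have hrow : ∀ i ∈ Finset.range N, ∑ h ∈ Finset.range N, ∫ ω, W i ω * W h ω ∂P
          ≤ K * (d N i / π N i) + c / N * K * S * (d N i / π N i) := by
        intro i hi
        rw [← Finset.add_sum_erase _ _ hi]
        have h2 : ∑ h ∈ (Finset.range N).erase i, ∫ ω, W i ω * W h ω ∂P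
            ≤ ∑ h ∈ (Finset.range N).erase i,
                c / N * K * (d N i / π N i) * (d N h / π N h) := by
          refine Finset.sum_le_sum fun h hh => ?_
          exact hoff i hi h (Finset.mem_of_mem_erase hh)
            (fun he => (Finset.ne_of_mem_erase hh) he.symm)
        have h3 : ∑ h ∈ (Finset.range N).erase i,
              c / N * K * (d N i / π N i) * (d N h / π N h)
            = c / N * K * (d N i / π N i) * ∑ h ∈ (Finset.range N).erase i, d N h / π N h := by
          rw [Finset.mul_sum]
        have h4 : ∑ h ∈ (Finset.range N).erase i, d N h / π N h ≤ S :=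
          Finset.sum_le_sum_of_subset_of_nonneg (Finset.erase_subset _ _)
            (fun h hh _ => hq0 N h hh)
        have h5 : 0 ≤ c / N * K * (d N i / π N i) :=
          mul_nonneg (mul_nonneg (div_nonneg hc.le hNpos.le) hK.le) (hq0 N i hi)
        have h6 := mul_le_mul_of_nonneg_left h4 h5
        have h7 := hdiag i hi
        rw [h3] at h2
        have := le_trans h2 h6
        nlinarith [this, h7]
      calc ∑ i ∈ Finset.range N, ∑ h ∈ Finset.range N, ∫ ω, W i ω * W h ω ∂P
          ≤ ∑ i ∈ Finset.range N,
              (K * (d N i / π N i) + c / N * K * S * (d N i / π N i)) :=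
            Finset.sum_le_sum hrow
        _ = K * S + c / N * K * S ^ 2 := by
            rw [Finset.sum_add_distrib, ← Finset.mul_sum, ← Finset.mul_sum, ← hS_def]
            ring
    have hmono := mul_le_mul_of_nonneg_left hsum
      (by positivity : (0:ℝ) ≤ (N:ℝ)⁻¹ ^ 2)
    rw [hvar_eq]
    have haS : a N = (N:ℝ)⁻¹ * S := by simp only [ha_def, hS_def]
    calc (N:ℝ)⁻¹ ^ 2 * ∑ i ∈ Finset.range N, ∑ h ∈ Finset.range N, ∫ ω, W i ω * W h ω ∂P
        ≤ (N:ℝ)⁻¹ ^ 2 * (K * S + c / N * K * S ^ 2) := hmono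
      _ = (K * a N + c * K * a N ^ 2) / N := by rw [haS]; field_simp
  -- limit of the bound
  have hb : Tendsto (fun N : ℕ => (K * a N + c * K * a N ^ 2) / N) atTop (𝓝 0) := by
    have h1 : Tendsto (fun N : ℕ => K * a N + c * K * a N ^ 2) atTop
        (𝓝 (K * 1 + c * K * 1 ^ 2)) :=
      (tendsto_const_nhds.mul hlln).add (tendsto_const_nhds.mul (hlln.pow 2))
    have h2 := h1.mul tendsto_inv_atTop_nhds_zero_nat
    simpa [div_eq_mul_inv] using h2
  have hev : ∀ᶠ N : ℕ in atTop, |κ1 N * a N - 1| < ε / 2 := by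
    obtain ⟨N₀, hN₀⟩ := Metric.tendsto_atTop.mp hmean (ε/2) hε2
    exact eventually_atTop.mpr ⟨N₀, fun n hn => by
      have := hN₀ n hn; rwa [Real.dist_eq] at this⟩
  have hbound : ∀ᶠ N : ℕ in atTop,
      P {ω | ε ≤ |X N ω - 1|}
        ≤ ENNReal.ofReal ((K * a N + c * K * a N ^ 2) / N / (ε/2) ^ 2) := by
    filter_upwards [hev, eventually_gt_atTop 0] with N h1 hN
    have hcheb := meas_ge_le_variance_div_sq (hXL2 N) hε2
    have hsub : {ω | ε ≤ |X N ω - 1|} ⊆ {ω | ε/2 ≤ |X N ω - ∫ ω', X N ω' ∂P|} := by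
      intro ω hω
      simp only [Set.mem_setOf_eq] at hω ⊢
      rw [hEX N]
      have h3 : |X N ω - 1| ≤ |X N ω - κ1 N * a N| + |κ1 N * a N - 1| := abs_sub_le _ _ _
      linarith
    refine le_trans (measure_mono hsub) (le_trans hcheb ?_)
    exact ENNReal.ofReal_le_ofReal
      ((div_le_div_iff_of_pos_right (by positivity)).mpr (hVar N hN))
  have hg : Tendsto (fun N : ℕ =>
      ENNReal.ofReal ((K * a N + c * K * a N ^ 2) / N / (ε/2) ^ 2)) atTop (𝓝 0) := by
    simpa using ENNReal.tendsto_ofReal (hb.div_const ((ε/2) ^ 2))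
  show Tendsto (fun N : ℕ => P {ω | ε ≤ |X N ω - 1|}) atTop (𝓝 0)
  exact tendsto_of_tendsto_of_tendsto_of_le_of_le' tendsto_const_nhds hg
    (Eventually.of_forall fun N => zero_le) hbound
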